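/- Let p be an odd prime, A an associative unital ℂ-algebra, a ∈ ZMod p, and M : ZMod p → A a map with M(0) = 1 and M(g) · M(h) = ω^{(a·g·h).val} • M(g + h) for all g, h ∈ ZMod p (a projective representation of ZMod p with 2-cocycle ω^{a·g·h}). For each x ∈ ZMod p set e_x = (1/p) • ∑_{g ∈ ZMod p} Θ_{x,a}(g) • M(g). Then the elements (e_x)_{x ∈ ZMod p} form a complete family of orthogonal idempotents: e_x · e_x = e_x for all x, e_x · e_y = 0 whenever x ≠ y, and ∑_{x ∈ ZMod p} e_x = 1. -/

import Mathlib

/-- Let `p` be an odd prime, `A` an associative unital `ℂ`-algebra,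
and `M : ZMod p → A` a projective representation with 2-cocycle `ω^{a·g·h}`
(`M 0 = 1`, `M g · M h = ω^{(a·g·h).val} • M (g+h)`). Then the elements
`e_x = (1/p) • ∑_g Θ_{x,a}(g) • M g`, with
`Θ_{x,a}(g) = ω^{(g·x + a·g·g·2⁻¹).val}`, form a complete family of orthogonal
idempotents. -/
theorem projective_rep_idempotents_odd (p : ℕ) [Fact p.Prime] (hodd : Odd p)
    (ω : ℂ) (hω : ω = Complex.exp (2 * Real.pi * Complex.I / p))
    (A : Type*) [Ring A] [Algebra ℂ A]
    (a : ZMod p) (M : ZMod p → A)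
    (hM0 : M 0 = 1)
    (hMmul : ∀ g h : ZMod p, M g * M h = (ω ^ (a * g * h).val) • M (g + h))
    (e : ZMod p → A)
    (he : ∀ x : ZMod p,
      e x = ((1 : ℂ) / p) •
        ∑ g : ZMod p, (ω ^ (g * x + a * g * g * 2⁻¹).val) • M g) :
    (∀ x : ZMod p, e x * e x = e x) ∧
      (∀ x y : ZMod p, x ≠ y → e x * e y = 0) ∧
      (∑ x : ZMod p, e x) = 1 := by
  have hp : p.Prime := Fact.out
  have hp0 : p ≠ 0 := hp.ne_zero
  have hp2 : p ≠ 2 := by rintro rfl; exact (Nat.not_odd_iff_even.mpr (by decide)) hodd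
  have hprim : IsPrimitiveRoot ω p := by
    rw [hω]; exact Complex.isPrimitiveRoot_exp p hp0
  have hω1 : ω ^ p = 1 := hprim.pow_eq_one
  have hPC : (p : ℂ) ≠ 0 := Nat.cast_ne_zero.mpr hp0
  -- additivity of the exponential character
  have hadd : ∀ m n : ZMod p, ω ^ (m + n).val = ω ^ m.val * ω ^ n.val := by
    intro m n
    rw [ZMod.val_add, ← pow_eq_pow_mod _ hω1, pow_add]
  -- 2 is invertible
  have h2 : (2 : ZMod p) ≠ 0 := by
    intro h
    have hd : (p : ℕ) ∣ 2 :=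
      (ZMod.natCast_eq_zero_iff 2 p).mp (by exact_mod_cast h)
    exact hp2 ((Nat.prime_dvd_prime_iff_eq hp Nat.prime_two).mp hd)
  -- character sum
  have hsum : ∀ b : ZMod p, (∑ g : ZMod p, ω ^ (g * b).val) =
      if b = 0 then (p : ℂ) else 0 := by
    intro b
    by_cases hb : b = 0
    · simp [hb, ZMod.val_zero, Finset.card_univ, ZMod.card]
    · rw [if_neg hb]
      have hbij : Function.Bijective (fun g : ZMod p => g * b) :=
        (mulRight_bijective₀ b hb)
      have h1 : (∑ g : ZMod p, ω ^ (g * b).val) = ∑ g : ZMod p, ω ^ g.val :=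
        Fintype.sum_bijective _ hbij _ _ (fun g => rfl)
      rw [h1]
      have h2' : (∑ g : ZMod p, ω ^ g.val) = ∑ i ∈ Finset.range p, ω ^ i := by
        refine Finset.sum_nbij' (fun g : ZMod p => g.val) (fun i : ℕ => (i : ZMod p))
          ?_ ?_ ?_ ?_ ?_
        · intro g _; exact Finset.mem_range.mpr (ZMod.val_lt g)
        · intro i _; exact Finset.mem_univ _
        · intro g _; simp [ZMod.natCast_val, ZMod.cast_id]
        · intro i hi; exact ZMod.val_cast_of_lt (Finset.mem_range.mp hi)
        · intro g _; rfl
      rw [h2']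
      exact hprim.geom_sum_eq_zero hp.one_lt
  have hsum' : ∀ b : ZMod p, (∑ x : ZMod p, ω ^ (b * x).val) =
      if b = 0 then (p : ℂ) else 0 := by
    intro b; simp_rw [mul_comm b]; exact hsum b
  -- the quadratic identity in ZMod p
  have hquad : ∀ g k x y : ZMod p,
      (g * x + a * g * g * 2⁻¹) + ((k - g) * y + a * (k - g) * (k - g) * 2⁻¹)
        + a * g * (k - g)
      = g * (x - y) + (k * y + a * k * k * 2⁻¹) := by
    intro g k x y
    field_simp
    ring
  -- key computation
  have hkey : ∀ x y : ZMod p, e x * e y = (if x = y then (1:ℂ) else 0) • e x := by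
    intro x y
    rw [he x, he y, smul_mul_smul_comm, Finset.sum_mul_sum]
    have step1 : (∑ g : ZMod p, ∑ h : ZMod p,
        (ω ^ (g * x + a * g * g * 2⁻¹).val • M g) *
          (ω ^ (h * y + a * h * h * 2⁻¹).val • M h))
        = ∑ k : ZMod p, ((∑ g : ZMod p, ω ^ (g * (x - y)).val) *
            ω ^ (k * y + a * k * k * 2⁻¹).val) • M k := by
      have inner : ∀ g : ZMod p, (∑ h : ZMod p,
          (ω ^ (g * x + a * g * g * 2⁻¹).val • M g) *
            (ω ^ (h * y + a * h * h * 2⁻¹).val • M h))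
          = ∑ k : ZMod p, (ω ^ (g * (x - y)).val *
              ω ^ (k * y + a * k * k * 2⁻¹).val) • M k := by
        intro g
        rw [← Equiv.sum_comp (Equiv.subRight g)
          (fun h => (ω ^ (g * x + a * g * g * 2⁻¹).val • M g) *
            (ω ^ (h * y + a * h * h * 2⁻¹).val • M h))]
        refine Finset.sum_congr rfl fun k _ => ?_
        simp only [Equiv.subRight_apply]
        rw [smul_mul_smul_comm, hMmul, smul_smul, add_sub_cancel]
        congr 1
        rw [← hadd, ← hadd, hquad g k x y, hadd]
      rw [Finset.sum_congr rfl (fun g _ => inner g), Finset.sum_comm]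
      refine Finset.sum_congr rfl fun k _ => ?_
      rw [← Finset.sum_smul, ← Finset.sum_mul]
    rw [step1, hsum (x - y)]
    by_cases hxy : x = y
    · subst hxy
      rw [if_pos rfl, sub_self, if_pos rfl, one_smul, Finset.smul_sum, Finset.smul_sum]
      refine Finset.sum_congr rfl fun k _ => ?_
      rw [smul_smul, smul_smul]
      congr 1
      field_simp
    · rw [if_neg (sub_ne_zero.mpr hxy), if_neg hxy, zero_smul]
      simp
  refine ⟨fun x => by rw [hkey x x, if_pos rfl, one_smul],
    fun x y hxy => by rw [hkey x y, if_neg hxy, zero_smul], ?_⟩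
  -- completeness
  have hcomp : (∑ x : ZMod p, e x) = ((1:ℂ)/p) • ∑ g : ZMod p,
      ((∑ x : ZMod p, ω ^ (g * x).val) * ω ^ (a * g * g * 2⁻¹).val) • M g := by
    simp only [he]
    rw [← Finset.smul_sum]
    congr 1
    rw [Finset.sum_comm]
    refine Finset.sum_congr rfl fun g _ => ?_
    simp_rw [hadd]
    rw [← Finset.sum_smul, ← Finset.sum_mul]
  rw [hcomp]
  rw [Finset.sum_eq_single 0 (by
      intro g _ hg
      rw [hsum' g, if_neg hg, zero_mul, zero_smul])
    (by intro h; exact absurd (Finset.mem_univ 0) h)]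
  rw [hsum' 0, if_pos rfl]
  simp only [mul_zero, zero_mul, ZMod.val_zero, pow_zero, mul_one, hM0, smul_smul]
  rw [show (1:ℂ)/p * p = 1 by field_simp, one_smul]
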